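/- Fix a real ε with 0 < ε < 1. For all integers m ≥ 2 and n ≥ 1 and every A ⊆ Fin m with |A| = n, setting d = ⌈2·(log₂ m)/ε⌉ and s = 2·d²·n, the number of functions f : Fin m → Fin d → Fin s for which there exists some x ∈ Fin m \ A with |Γ(x) ∩ Γ(A)| ≥ ε·d is less than s^{m·d}/m; in particular, the strong ε-reduction property for A holds for the majority of such functions. -/

import Mathlib

/-- `nbr f v` : the set of right-neighbors of a left vertex `v` in the
left-`d`-regular bipartite multigraph encoded by `f`. -/
def nbr {m d s : ℕ} (f : Fin m → Fin d → Fin s) (v : Fin m) : Finset (Fin s) :=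
  Finset.image (f v) Finset.univ

/-- `nbrs f A` : the set of right-neighbors of a set `A` of left vertices. -/
def nbrs {m d s : ℕ} (f : Fin m → Fin d → Fin s) (A : Finset (Fin m)) : Finset (Fin s) :=
  A.biUnion (nbr f)

/-- `f` is an `(m,s,d,k,δ)`-expander: every `A` with `|A| ≤ k` has
at least `(1-δ)·d·|A|` neighbors. -/
def IsExpander {m d s : ℕ} (f : Fin m → Fin d → Fin s) (k : ℕ) (δ : ℝ) : Prop :=
  ∀ A : Finset (Fin m), A.card ≤ k → (1 - δ) * d * A.card ≤ ((nbrs f A).card : ℝ)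

open Finset

lemma pi_count {d s : ℕ} (S : Finset (Fin d)) (T : Finset (Fin s)) :
    (univ.filter (fun h : Fin d → Fin s => ∀ i ∈ S, h i ∈ T)).card
      = T.card ^ S.card * s ^ (d - S.card) := by
  have he : univ.filter (fun h : Fin d → Fin s => ∀ i ∈ S, h i ∈ T)
      = Fintype.piFinset (fun i => if i ∈ S then T else univ) := by
    ext h
    simp only [mem_filter, mem_univ, true_and, Fintype.mem_piFinset]
    constructor
    · intro hh i
      by_cases hi : i ∈ S <;> simp [hi, hh]
    · intro hh i hi
      have := hh i
      simpa [hi] using this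
  rw [he, Fintype.card_piFinset]
  have : ∀ i : Fin d, (if i ∈ S then T else univ).card = if i ∈ S then T.card else s := by
    intro i; by_cases hi : i ∈ S <;> simp [hi]
  rw [Finset.prod_congr rfl (fun i _ => this i), Finset.prod_ite, Finset.prod_const,
    Finset.prod_const, Finset.filter_mem_eq_inter, Finset.univ_inter]
  congr 1
  have : filter (fun x => x ∉ S) univ = Sᶜ := by
    ext i; simp
  rw [this, Finset.card_compl, Fintype.card_fin]


lemma fix_count {m : ℕ} {γ : Type*} [Fintype γ] [DecidableEq γ] (x : Fin m) (c : γ) :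
    (univ.filter (fun g : Fin m → γ => g x = c)).card = Fintype.card γ ^ (m - 1) := by
  have he : univ.filter (fun g : Fin m → γ => g x = c)
      = Fintype.piFinset (fun y => if y = x then {c} else univ) := by
    ext g
    simp only [mem_filter, mem_univ, true_and, Fintype.mem_piFinset]
    constructor
    · intro hg y; by_cases hy : y = x <;> simp [hy, hg]
    · intro hg; have := hg x; simpa using this
  rw [he, Fintype.card_piFinset]
  have : ∀ y : Fin m, (if y = x then ({c} : Finset γ) else univ).card
      = if y = x then 1 else Fintype.card γ := by
    intro y; by_cases hy : y = x <;> simp [hy]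
  rw [Finset.prod_congr rfl (fun y _ => this y), Finset.prod_ite, Finset.prod_const,
    Finset.prod_const, one_pow, one_mul]
  congr 1
  have : filter (fun y => ¬ y = x) univ = {x}ᶜ := by ext y; simp
  rw [this, Finset.card_compl, Fintype.card_fin, Finset.card_singleton]

lemma nbrs_card_le {m d s : ℕ} (f : Fin m → Fin d → Fin s) (A : Finset (Fin m)) :
    (nbrs f A).card ≤ A.card * d := by
  refine le_trans (Finset.card_biUnion_le) ?_
  calc ∑ v ∈ A, (nbr f v).card ≤ ∑ v ∈ A, d := by
        refine Finset.sum_le_sum fun v _ => ?_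
        refine le_trans (Finset.card_image_le) (by simp)
    _ = A.card * d := by rw [Finset.sum_const, smul_eq_mul]

lemma countx_le {m d s n : ℕ} (hs : 0 < s) (A : Finset (Fin m)) (hA : A.card = n)
    (x : Fin m) (hx : x ∉ A) (t : ℕ) :
    (univ.filter (fun f : Fin m → Fin d → Fin s => t ≤ (nbr f x ∩ nbrs f A).card)).card
      ≤ d.choose t * ((n * d) ^ t * s ^ (d - t) * (s ^ d) ^ (m - 1)) := by
  haveI : NeZero s := ⟨hs.ne'⟩
  set c : Fin d → Fin s := fun _ => 0 with hc
  -- step 1: subset of biUnion over S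
  have hsub : (univ.filter (fun f : Fin m → Fin d → Fin s => t ≤ (nbr f x ∩ nbrs f A).card))
      ⊆ (Finset.powersetCard t (univ : Finset (Fin d))).biUnion
          (fun S => univ.filter (fun f : Fin m → Fin d → Fin s => ∀ i ∈ S, f x i ∈ nbrs f A)) := by
    intro f hf
    simp only [mem_filter, mem_univ, true_and] at hf
    set W := univ.filter (fun i : Fin d => f x i ∈ nbrs f A) with hW
    have hWt : t ≤ W.card := by
      refine le_trans hf (le_trans ?_ (Finset.card_image_le (s := W) (f := f x)))
      apply Finset.card_le_card
      intro y hy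
      rcases Finset.mem_inter.mp hy with ⟨hy1, hy2⟩
      rcases Finset.mem_image.mp hy1 with ⟨i, _, rfl⟩
      exact Finset.mem_image.mpr ⟨i, by simp [hW, hy2], rfl⟩
    obtain ⟨S, hSW, hScard⟩ := Finset.exists_subset_card_eq hWt
    refine Finset.mem_biUnion.mpr ⟨S, ?_, ?_⟩
    · exact Finset.mem_powersetCard.mpr ⟨Finset.subset_univ _, hScard⟩
    · simp only [mem_filter, mem_univ, true_and]
      intro i hi
      have := hSW hi
      simpa [hW] using this
  refine le_trans (Finset.card_le_card hsub) (le_trans (Finset.card_biUnion_le) ?_)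
  have hper : ∀ S ∈ Finset.powersetCard t (univ : Finset (Fin d)),
        (univ.filter (fun f : Fin m → Fin d → Fin s => ∀ i ∈ S, f x i ∈ nbrs f A)).card
          ≤ (n * d) ^ t * s ^ (d - t) * (s ^ d) ^ (m - 1) := by
    intro S hS
    obtain ⟨-, hScard⟩ := Finset.mem_powersetCard.mp hS
    have hfib := Finset.card_eq_sum_card_fiberwise
      (f := fun f : Fin m → Fin d → Fin s => Function.update f x c)
      (s := univ.filter (fun f : Fin m → Fin d → Fin s => ∀ i ∈ S, f x i ∈ nbrs f A))
      (t := univ.filter (fun g : Fin m → Fin d → Fin s => g x = c))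
      (fun f _ => by simp)
    rw [hfib]
    have hbound : ∀ g ∈ univ.filter (fun g : Fin m → Fin d → Fin s => g x = c),
        ((univ.filter (fun f : Fin m → Fin d → Fin s => ∀ i ∈ S, f x i ∈ nbrs f A)).filter
          (fun f => Function.update f x c = g)).card ≤ (n * d) ^ t * s ^ (d - t) := by
      intro g hg
      have hinj : Set.InjOn (fun f : Fin m → Fin d → Fin s => f x)
          ((univ.filter (fun f : Fin m → Fin d → Fin s => ∀ i ∈ S, f x i ∈ nbrs f A)).filter
            (fun f => Function.update f x c = g)) := by
        intro f1 h1 f2 h2 he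
        simp only [coe_filter, Set.mem_setOf_eq, mem_filter] at h1 h2
        funext y
        by_cases hy : y = x
        · subst hy; exact he
        · have e1 := congrFun h1.2 y
          have e2 := congrFun h2.2 y
          rw [Function.update_of_ne hy] at e1 e2
          rw [e1, e2]
      have hmap : ∀ f ∈ (univ.filter (fun f : Fin m → Fin d → Fin s => ∀ i ∈ S, f x i ∈ nbrs f A)).filter
            (fun f => Function.update f x c = g),
          f x ∈ univ.filter (fun h : Fin d → Fin s => ∀ i ∈ S, h i ∈ nbrs g A) := by
        intro f hf
        simp only [mem_filter, mem_univ, true_and] at hf ⊢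
        have hnbrs : nbrs f A = nbrs g A := by
          unfold nbrs nbr
          refine Finset.biUnion_congr rfl (fun v hv => ?_)
          have hvx : v ≠ x := fun h => hx (h ▸ hv)
          have := congrFun hf.2 v
          rw [Function.update_of_ne hvx] at this
          rw [this]
        intro i hi
        exact hnbrs ▸ hf.1 i hi
      calc _ ≤ (univ.filter (fun h : Fin d → Fin s => ∀ i ∈ S, h i ∈ nbrs g A)).card :=
            Finset.card_le_card_of_injOn _ hmap hinj
        _ = (nbrs g A).card ^ t * s ^ (d - t) := by rw [pi_count, hScard]
        _ ≤ (n * d) ^ t * s ^ (d - t) := by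
            refine Nat.mul_le_mul_right _ (Nat.pow_le_pow_left ?_ _)
            exact hA ▸ nbrs_card_le g A
    calc _ ≤ ∑ _g ∈ univ.filter (fun g : Fin m → Fin d → Fin s => g x = c),
            ((n * d) ^ t * s ^ (d - t)) := Finset.sum_le_sum hbound
      _ = (univ.filter (fun g : Fin m → Fin d → Fin s => g x = c)).card *
            ((n * d) ^ t * s ^ (d - t)) := by rw [Finset.sum_const, smul_eq_mul]
      _ = (n * d) ^ t * s ^ (d - t) * (s ^ d) ^ (m - 1) := by
          rw [fix_count]
          have : Fintype.card (Fin d → Fin s) = s ^ d := by simp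
          rw [this, mul_comm]
  calc _ ≤ ∑ _S ∈ Finset.powersetCard t (univ : Finset (Fin d)),
        ((n * d) ^ t * s ^ (d - t) * (s ^ d) ^ (m - 1)) := Finset.sum_le_sum hper
    _ = d.choose t * ((n * d) ^ t * s ^ (d - t) * (s ^ d) ^ (m - 1)) := by
        rw [Finset.sum_const, smul_eq_mul, Finset.card_powersetCard, Finset.card_univ,
          Fintype.card_fin]

theorem stmt_6 (ε : ℝ) (hε0 : 0 < ε) (hε1 : ε < 1) (m n : ℕ) (hm : 2 ≤ m) (hn : 1 ≤ n)
    (A : Finset (Fin m)) (hA : A.card = n)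
    (d s : ℕ) (hd : d = ⌈2 * Real.logb 2 m / ε⌉₊) (hs : s = 2 * d ^ 2 * n) :
    (({f : Fin m → Fin d → Fin s |
        ∃ x : Fin m, x ∉ A ∧ ε * d ≤ ((nbr f x ∩ nbrs f A).card : ℝ)}).ncard : ℝ)
      < (s : ℝ) ^ (m * d) / m
    ∧ (s : ℝ) ^ (m * d) / 2
      < (({f : Fin m → Fin d → Fin s |
          ∀ x : Fin m, x ∉ A → ((nbr f x ∩ nbrs f A).card : ℝ) ≤ ε * d}).ncard : ℝ) := by
  classical
  set t : ℕ := ⌈ε * d⌉₊ with ht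
  -- basic positivity facts
  have hm1 : (1 : ℝ) < m := by exact_mod_cast lt_of_lt_of_le one_lt_two (by exact_mod_cast hm)
  have hlogpos : 0 < Real.logb 2 m := Real.logb_pos one_lt_two hm1
  have hdpos : 0 < d := by
    rw [hd]
    exact Nat.ceil_pos.mpr (by positivity)
  have hspos : 0 < s := by
    rw [hs]; positivity
  have htd : t ≤ d := by
    rw [ht]
    refine Nat.ceil_le.mpr ?_
    have hdn : (0:ℝ) ≤ (d:ℝ) := Nat.cast_nonneg d
    nlinarith
  -- key: m^2 ≤ 2^t  (in ℕ)
  have hkey : m ^ 2 ≤ 2 ^ t := by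
    have h1 : 2 * Real.logb 2 m / ε ≤ (d : ℝ) := hd ▸ Nat.le_ceil _
    have h2 : 2 * Real.logb 2 m ≤ ε * d := by
      rw [div_le_iff₀ hε0] at h1; linarith
    have h3 : 2 * Real.logb 2 m ≤ (t : ℝ) := le_trans h2 (Nat.le_ceil _)
    have h4 : ((m : ℝ) ^ 2) ≤ (2 : ℝ) ^ (t : ℝ) := by
      have hm2pos : (0 : ℝ) < (m : ℝ) ^ 2 := by positivity
      calc ((m : ℝ) ^ 2) = (2 : ℝ) ^ Real.logb 2 ((m : ℝ) ^ 2) :=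
            (Real.rpow_logb two_pos (by norm_num) hm2pos).symm
        _ ≤ (2 : ℝ) ^ (t : ℝ) := by
            apply Real.rpow_le_rpow_of_exponent_le one_le_two
            rw [Real.logb_pow]
            exact h3
    rw [Real.rpow_natCast] at h4
    exact_mod_cast h4
  -- the bad set as a Finset
  set Bad : Finset (Fin m → Fin d → Fin s) :=
    univ.filter (fun f => ∃ x : Fin m, x ∉ A ∧ t ≤ (nbr f x ∩ nbrs f A).card) with hBadDef
  have hset1 : ({f : Fin m → Fin d → Fin s |
      ∃ x : Fin m, x ∉ A ∧ ε * d ≤ ((nbr f x ∩ nbrs f A).card : ℝ)}).ncard = Bad.card := by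
    rw [← Set.ncard_coe_finset]
    congr 1
    ext f
    simp only [hBadDef, Finset.coe_filter, Set.mem_setOf_eq, mem_univ, true_and, ht]
    constructor
    · rintro ⟨x, hx, hxc⟩; exact ⟨x, hx, Nat.ceil_le.mpr hxc⟩
    · rintro ⟨x, hx, hxc⟩; exact ⟨x, hx, Nat.ceil_le.mp hxc⟩
  -- nat bound on Bad.card
  set B : ℕ := d.choose t * ((n * d) ^ t * s ^ (d - t) * (s ^ d) ^ (m - 1)) with hB
  have hBadle : Bad.card ≤ (m - n) * B := by
    have hsub : Bad ⊆ Aᶜ.biUnion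
        (fun x => univ.filter (fun f : Fin m → Fin d → Fin s =>
          t ≤ (nbr f x ∩ nbrs f A).card)) := by
      intro f hf
      simp only [hBadDef, mem_filter, mem_univ, true_and] at hf
      obtain ⟨x, hx, hxc⟩ := hf
      exact Finset.mem_biUnion.mpr ⟨x, Finset.mem_compl.mpr hx, by simp [hxc]⟩
    calc Bad.card ≤ _ := Finset.card_le_card hsub
      _ ≤ ∑ x ∈ Aᶜ, (univ.filter (fun f : Fin m → Fin d → Fin s =>
            t ≤ (nbr f x ∩ nbrs f A).card)).card := Finset.card_biUnion_le
      _ ≤ ∑ x ∈ Aᶜ, B := Finset.sum_le_sum (fun x hx =>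
            countx_le hspos A hA x (Finset.mem_compl.mp hx) t)
      _ = (m - n) * B := by
          rw [Finset.sum_const, smul_eq_mul, Finset.card_compl, Fintype.card_fin, hA]
  -- nat strict inequality : (m-n) * B * m < s ^ (m*d)
  have hmain : (m - n) * B * m < s ^ (m * d) := by
    have hexp : m * d = t + ((d - t) + d * (m - 1)) := by
      have h5 : d * (m - 1) + d = d * m := by
        have : (m - 1) + 1 = m := by omega
        calc d * (m - 1) + d = d * ((m - 1) + 1) := by ring
          _ = d * m := by rw [this]
      have h6 : t + (d - t) = d := by omega
      have h7 : m * d = d * m := Nat.mul_comm m d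
      omega
    have hpow : s ^ (m * d) = s ^ t * (s ^ (d - t) * (s ^ d) ^ (m - 1)) := by
      rw [hexp, pow_add, pow_add, pow_mul]
    have hst : s ^ t = 2 ^ t * d ^ t * (n * d) ^ t := by
      rw [← mul_pow, ← mul_pow, hs]; ring_nf
    have hmn : (m - n) * m < 2 ^ t := by
      calc (m - n) * m < m * m := by
            apply Nat.mul_lt_mul_of_lt_of_le (by omega) (le_refl m) (by omega)
        _ = m ^ 2 := (sq m).symm
        _ ≤ 2 ^ t := hkey
    have hX : 0 < d ^ t * ((n * d) ^ t * (s ^ (d - t) * (s ^ d) ^ (m - 1))) := by positivity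
    calc (m - n) * B * m
        = ((m - n) * m) * (d.choose t * ((n * d) ^ t * (s ^ (d - t) * (s ^ d) ^ (m - 1)))) := by
          rw [hB]; ring
      _ ≤ ((m - n) * m) * (d ^ t * ((n * d) ^ t * (s ^ (d - t) * (s ^ d) ^ (m - 1)))) := by
          apply Nat.mul_le_mul_left
          apply Nat.mul_le_mul_right
          exact le_trans (Nat.choose_le_descFactorial d t) (Nat.descFactorial_le_pow d t)
      _ < 2 ^ t * (d ^ t * ((n * d) ^ t * (s ^ (d - t) * (s ^ d) ^ (m - 1)))) :=
          Nat.mul_lt_mul_of_lt_of_le hmn (le_refl _) hX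
      _ = s ^ (m * d) := by rw [hpow, hst]; ring
  -- first conjunct
  have hmpos : (0 : ℝ) < m := by positivity
  have hcast : ((s : ℝ)) ^ (m * d) = ((s ^ (m * d) : ℕ) : ℝ) := by push_cast; ring
  have hfirst : ((Bad.card : ℕ) : ℝ) < (s : ℝ) ^ (m * d) / m := by
    rw [lt_div_iff₀ hmpos, hcast]
    have : Bad.card * m < s ^ (m * d) :=
      lt_of_le_of_lt (Nat.mul_le_mul_right m hBadle) hmain
    exact_mod_cast this
  constructor
  · rw [hset1]; exact hfirst
  -- second conjunct
  · set Good : Finset (Fin m → Fin d → Fin s) :=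
      univ.filter (fun f => ∀ x : Fin m, x ∉ A → ((nbr f x ∩ nbrs f A).card : ℝ) ≤ ε * d)
      with hGoodDef
    have hset2 : ({f : Fin m → Fin d → Fin s |
        ∀ x : Fin m, x ∉ A → ((nbr f x ∩ nbrs f A).card : ℝ) ≤ ε * d}).ncard = Good.card := by
      rw [← Set.ncard_coe_finset]
      congr 1
      ext f
      simp [hGoodDef]
    have htot : (univ : Finset (Fin m → Fin d → Fin s)).card = s ^ (m * d) := by
      rw [Finset.card_univ]
      simp [mul_comm m d, pow_mul]
    have hcover : (univ : Finset (Fin m → Fin d → Fin s)) ⊆ Bad ∪ Good := by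
      intro f _
      by_cases hfb : f ∈ Bad
      · exact Finset.mem_union_left _ hfb
      · apply Finset.mem_union_right
        simp only [hBadDef, mem_filter, mem_univ, true_and, not_exists, not_and, not_le] at hfb
        simp only [hGoodDef, mem_filter, mem_univ, true_and]
        intro x hx
        have := hfb x hx
        have := Nat.lt_ceil.mp this
        linarith
    have hGoodge : s ^ (m * d) ≤ Good.card + Bad.card := by
      calc s ^ (m * d) = (univ : Finset (Fin m → Fin d → Fin s)).card := htot.symm
        _ ≤ (Bad ∪ Good).card := Finset.card_le_card hcover
        _ ≤ Bad.card + Good.card := Finset.card_union_le _ _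
        _ = Good.card + Bad.card := by ring
    rw [hset2]
    have hGR : ((s ^ (m * d) : ℕ) : ℝ) - Bad.card ≤ (Good.card : ℝ) := by
      have := hGoodge
      have : ((s ^ (m * d) : ℕ) : ℝ) ≤ (Good.card : ℝ) + (Bad.card : ℝ) := by exact_mod_cast this
      linarith
    have hhalf : (s : ℝ) ^ (m * d) / m ≤ (s : ℝ) ^ (m * d) / 2 := by
      apply div_le_div_of_nonneg_left (by positivity) (by norm_num)
      exact_mod_cast hm
    rw [hcast] at *
    linarith
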